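/- Let C be a building of type (W,S), B a fixed chamber, π the folding map, γ a fixed minimal gallery in W from 1 to w. If Γ₁Δ₁ and Γ₂Δ₂ are two minimal galleries from B to the same chamber c in C such that π(Γ₁) = π(Γ₂) = γ, then Γ₁ = Γ₂. In particular, the chamber of Γ_i lying over w is uniquely determined by c and γ. -/

import Mathlib

/-- A building of type `(W, S)` (Abramenko–Brown `W`-metric definition): a set of chambers
`C` with a `W`-valued distance `δC` satisfying the standard building axioms (WD1)–(WD3). -/
structure IsBuilding {B W C : Type*} [Group W] {M : CoxeterMatrix B}
    (cs : CoxeterSystem M W) (δC : C → C → W) : Prop where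
  eq_one_iff : ∀ c d : C, δC c d = 1 ↔ c = d
  wd2 : ∀ (c d d' : C) (i : B), δC d d' = cs.simple i →
    δC c d' = δC c d * cs.simple i ∨ δC c d' = δC c d
  wd2' : ∀ (c d d' : C) (i : B), δC d d' = cs.simple i →
    cs.length (δC c d * cs.simple i) = cs.length (δC c d) + 1 →
    δC c d' = δC c d * cs.simple i
  wd3 : ∀ (c d : C) (i : B), ∃ d' : C, δC d d' = cs.simple i ∧
    δC c d' = δC c d * cs.simple i

/-- A gallery in the building: a sequence of consecutively adjacent chambers. -/
def IsGallery {B W C : Type*} [Group W] {M : CoxeterMatrix B}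
    (cs : CoxeterSystem M W) (δC : C → C → W) (l : List C) : Prop :=
  l.Chain' (fun c d => ∃ i : B, δC c d = cs.simple i)

/-- A minimal gallery from `x` to `y`: a gallery starting at `x`, ending at `y`,
whose length (number of steps) equals `ℓ(δC x y)`. -/
def IsMinGallery {B W C : Type*} [Group W] {M : CoxeterMatrix B}
    (cs : CoxeterSystem M W) (δC : C → C → W) (x y : C) (l : List C) : Prop :=
  IsGallery cs δC l ∧ l.head? = some x ∧ l.getLast? = some y ∧
    l.length = cs.length (δC x y) + 1

/-- A gallery in the Coxeter complex `W`: consecutive elements differ by a simple reflection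
on the right. -/
def IsWGallery {B W : Type*} [Group W] {M : CoxeterMatrix B}
    (cs : CoxeterSystem M W) (l : List W) : Prop :=
  l.Chain' (fun u v => ∃ i : B, v = u * cs.simple i)

/-- A minimal gallery from `u` to `w` in the Coxeter complex `W`. -/
def IsMinWGallery {B W : Type*} [Group W] {M : CoxeterMatrix B}
    (cs : CoxeterSystem M W) (u w : W) (l : List W) : Prop :=
  IsWGallery cs l ∧ l.head? = some u ∧ l.getLast? = some w ∧
    l.length = cs.length (u⁻¹ * w) + 1

section Aux

variable {B W C : Type*} [Group W] {M : CoxeterMatrix B} {cs : CoxeterSystem M W}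
  {δC : C → C → W}

private lemma simple_ne_one' (i : B) : cs.simple i ≠ 1 := by
  intro h
  have h1 := cs.length_simple i
  rw [h, cs.length_one] at h1
  exact absurd h1 (by omega)

/-- Adjacency is symmetric. -/
private lemma adj_symm (hb : IsBuilding cs δC) {d d' : C} {i : B}
    (h : δC d d' = cs.simple i) : δC d' d = cs.simple i := by
  rcases hb.wd2 d' d d' i h with h1 | h1
  · have e : δC d' d' = 1 := (hb.eq_one_iff d' d').mpr rfl
    rw [e] at h1
    have : δC d' d = (cs.simple i)⁻¹ := by
      rw [eq_inv_iff_mul_eq_one]; exact h1.symm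
    rwa [cs.inv_simple] at this
  · have e : δC d' d' = 1 := (hb.eq_one_iff d' d').mpr rfl
    rw [e] at h1
    have : d' = d := (hb.eq_one_iff d' d).mp h1.symm
    subst this
    rw [(hb.eq_one_iff d' d').mpr rfl] at h
    exact absurd h.symm (simple_ne_one' i)

/-- The reverse of a gallery is a gallery. -/
private lemma gallery_reverse (hb : IsBuilding cs δC) {l : List C}
    (h : IsGallery cs δC l) : IsGallery cs δC l.reverse := by
  rw [IsGallery, List.Chain', List.isChain_reverse]
  exact List.IsChain.imp (fun a b ⟨i, hi⟩ => ⟨i, adj_symm hb hi⟩) h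

/-- Along a gallery, the distance from a fixed chamber grows by at most the number of steps. -/
private lemma gallery_le (hb : IsBuilding cs δC) :
    ∀ (l : List C) (x a b : C), IsGallery cs δC l → l.head? = some a →
      l.getLast? = some b →
      cs.length (δC x b) ≤ cs.length (δC x a) + (l.length - 1) := by
  intro l
  induction l with
  | nil => intro x a b _ h; simp at h
  | cons hd tl ih =>
    intro x a b hg hh hlast
    have ha : hd = a := by simpa using hh
    subst ha
    match tl, hg, hlast with
    | [], _, hlast =>
      have hb' : b = hd := by simpa using hlast.symm
      subst hb'; simp
    | hd₂ :: t, hg, hlast =>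
      obtain ⟨⟨i, hi⟩, hg₂⟩ := List.isChain_cons_cons.mp hg
      have hlast₂ : (hd₂ :: t).getLast? = some b := by
        rwa [List.getLast?_cons_cons] at hlast
      have h1 := ih x hd₂ b hg₂ rfl hlast₂
      have h2 : cs.length (δC x hd₂) ≤ cs.length (δC x hd) + 1 := by
        rcases hb.wd2 x hd hd₂ i hi with h3 | h3
        · rw [h3]
          rcases cs.length_mul_simple (δC x hd) i with h4 | h4 <;> omega
        · rw [h3]; omega
      simp only [List.length_cons] at h1 ⊢
      omega

/-- There exists a gallery of length `ℓ(δC a b)` from `a` to `b`. -/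
private lemma exists_gallery (hb : IsBuilding cs δC) :
    ∀ (n : ℕ) (a b : C), cs.length (δC a b) = n →
      ∃ l : List C, IsGallery cs δC l ∧ l.head? = some a ∧ l.getLast? = some b ∧
        l.length = n + 1 := by
  intro n
  induction n with
  | zero =>
    intro a b h
    have : a = b := (hb.eq_one_iff a b).mp (cs.length_eq_zero_iff.mp h)
    subst this
    exact ⟨[a], List.isChain_singleton a, rfl, rfl, rfl⟩
  | succ n ih =>
    intro a b h
    have hne : δC a b ≠ 1 := by
      intro e; rw [e, cs.length_one] at h; omega
    obtain ⟨i, hi⟩ := cs.exists_rightDescent_of_ne_one hne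
    rw [cs.isRightDescent_iff] at hi
    obtain ⟨b', hbb', hab'⟩ := hb.wd3 a b i
    have hlen : cs.length (δC a b') = n := by rw [hab']; omega
    obtain ⟨l, hl, hh, hlast, hlen'⟩ := ih a b' hlen
    refine ⟨l ++ [b], ?_, ?_, List.getLast?_concat, by simp [hlen']⟩
    · rw [IsGallery, List.Chain', List.isChain_append]
      refine ⟨hl, List.isChain_singleton b, ?_⟩
      intro x hx y hy
      simp only [List.head?_cons, Option.mem_def, Option.some.injEq] at hy
      subst hy
      rw [hlast] at hx
      simp only [Option.mem_def, Option.some.injEq] at hx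
      subst hx
      exact ⟨i, adj_symm hb hbb'⟩
    · match l, hh with
      | a' :: t, hh =>
        have : a' = a := by simpa using hh
        subst this; rfl

/-- Distance is symmetric in length. -/
private lemma length_symm (hb : IsBuilding cs δC) (a b : C) :
    cs.length (δC b a) = cs.length (δC a b) := by
  have key : ∀ x y : C, cs.length (δC y x) ≤ cs.length (δC x y) := by
    intro x y
    obtain ⟨l, hl, hh, hlast, hlen⟩ := exists_gallery hb (cs.length (δC x y)) x y rfl
    have h0 : cs.length (δC y y) = 0 := by
      rw [(hb.eq_one_iff y y).mpr rfl, cs.length_one]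
    have h1 := gallery_le hb l.reverse y y x (gallery_reverse hb hl)
      (by rw [List.head?_reverse, hlast]) (by rw [List.getLast?_reverse, hh])
    rw [h0, List.length_reverse, hlen] at h1
    omega
  exact le_antisymm (key a b) (key b a)

/-- If the distance from `x` grows by exactly the number of steps along a gallery, then
each step multiplies the distance by the corresponding letter and increases length by 1. -/
private lemma squeeze (hb : IsBuilding cs δC) :
    ∀ (l : List C) (x a b : C), IsGallery cs δC l → l.head? = some a →
      l.getLast? = some b →
      cs.length (δC x b) = cs.length (δC x a) + (l.length - 1) →
      l.Chain' (fun p q => δC x q = δC x p * δC p q ∧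
        cs.length (δC x q) = cs.length (δC x p) + 1) := by
  intro l
  induction l with
  | nil => intro x a b _ h; simp at h
  | cons hd tl ih =>
    intro x a b hg hh hlast heq
    have ha : hd = a := by simpa using hh
    subst ha
    match tl, hg, hlast with
    | [], _, _ => exact List.isChain_singleton hd
    | hd₂ :: t, hg, hlast =>
      obtain ⟨⟨i, hi⟩, hg₂⟩ := List.isChain_cons_cons.mp hg
      have hlast₂ : (hd₂ :: t).getLast? = some b := by
        rwa [List.getLast?_cons_cons] at hlast
      have hbound := gallery_le hb (hd₂ :: t) x hd₂ b hg₂ rfl hlast₂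
      simp only [List.length_cons] at heq hbound
      have hge : cs.length (δC x hd) + 1 ≤ cs.length (δC x hd₂) := by omega
      have hstep : δC x hd₂ = δC x hd * cs.simple i ∧
          cs.length (δC x hd₂) = cs.length (δC x hd) + 1 := by
        rcases hb.wd2 x hd hd₂ i hi with h3 | h3
        · refine ⟨h3, ?_⟩
          rw [h3] at hge ⊢
          rcases cs.length_mul_simple (δC x hd) i with h4 | h4 <;> omega
        · rw [h3] at hge; omega
      have heq₂ : cs.length (δC x b) = cs.length (δC x hd₂) + ((hd₂ :: t).length - 1) := by
        simp only [List.length_cons]; omega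
      have := ih x hd₂ b hg₂ rfl hlast₂ heq₂
      rw [List.Chain', List.isChain_cons_cons]
      exact ⟨⟨by rw [hi]; exact hstep.1, hstep.2⟩, this⟩

private lemma chain'_getElem {α : Type*} {R : α → α → Prop} {l : List α} (h : l.Chain' R)
    {i : ℕ} (h1 : i < l.length) (h2 : i + 1 < l.length) :
    R (l[i]'h1) (l[i + 1]'h2) := by
  have := List.isChain_iff_getElem.mp h i (by omega)
  simpa [List.get_eq_getElem] using this

/-- Uniqueness of the chamber one step further along two minimal galleries to `c`. -/
private lemma step_unique (hb : IsBuilding cs δC) {c d x' y' : C} {t t' : B}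
    (ht : δC d x' = cs.simple t) (ht' : δC d y' = cs.simple t')
    (hstt : cs.simple t = cs.simple t')
    (hcx : δC c d = δC c x' * cs.simple t) (hcy : δC c d = δC c y' * cs.simple t')
    (hlen : cs.length (δC c d) = cs.length (δC c x') + 1) : x' = y' := by
  have hxd : δC x' d = cs.simple t := adj_symm hb ht
  have hcxy : δC c x' = δC c y' := by
    rw [← hstt] at hcy
    rw [hcy] at hcx
    exact (mul_right_cancel hcx).symm
  rcases hb.wd2 x' d y' t' ht' with hcase | hcase
  · rw [hxd, hstt, cs.simple_mul_simple_self] at hcase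
    exact (hb.eq_one_iff x' y').mp hcase
  · rw [hxd, hstt] at hcase
    have hlen' : cs.length (δC c x' * cs.simple t') = cs.length (δC c x') + 1 := by
      rw [← hstt, ← hcx]; exact hlen
    have h := hb.wd2' c x' y' t' hcase hlen'
    rw [hcxy] at h
    have : cs.simple t' = 1 := by rwa [left_eq_mul] at h
    exact absurd this (simple_ne_one' t')

end Aux

set_option maxHeartbeats 1000000 in
/-- Two minimal galleries from `Bc` to the same chamber `c` whose initial segments both
project to the same minimal gallery `γ` in `W` have equal initial segments; in particular
the chamber lying over the endpoint of `γ` is determined by `c` and `γ`. -/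
theorem initial_segment_unique {B W C : Type*} [Group W] {M : CoxeterMatrix B}
    (cs : CoxeterSystem M W) (δC : C → C → W) (hb : IsBuilding cs δC) (Bc c : C)
    (w : W) (γ : List W) (hγ : IsMinWGallery cs 1 w γ)
    (G₁ G₂ Γ₁ Γ₂ : List C)
    (hG₁ : IsMinGallery cs δC Bc c G₁) (hG₂ : IsMinGallery cs δC Bc c G₂)
    (hΓ₁ : Γ₁ <+: G₁) (hΓ₂ : Γ₂ <+: G₂)
    (hπ₁ : Γ₁.map (δC Bc) = γ) (hπ₂ : Γ₂.map (δC Bc) = γ) :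
    Γ₁ = Γ₂ := by
  obtain ⟨hg₁, hh₁, hl₁, hn₁⟩ := hG₁
  obtain ⟨hg₂, hh₂, hl₂, hn₂⟩ := hG₂
  have hlen₁ : Γ₁.length = γ.length := by rw [← hπ₁, List.length_map]
  have hlen₂ : Γ₂.length = γ.length := by rw [← hπ₂, List.length_map]
  have hk₁ : γ.length ≤ G₁.length := hlen₁ ▸ hΓ₁.length_le
  have hk₂ : γ.length ≤ G₂.length := hlen₂ ▸ hΓ₂.length_le
  have hBcBc : cs.length (δC Bc Bc) = 0 := by
    rw [(hb.eq_one_iff Bc Bc).mpr rfl, cs.length_one]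
  have hcc : cs.length (δC c c) = 0 := by
    rw [(hb.eq_one_iff c c).mpr rfl, cs.length_one]
  -- the "forward" chains
  have hA₁ := squeeze hb G₁ Bc Bc c hg₁ hh₁ hl₁ (by rw [hBcBc, hn₁]; omega)
  have hA₂ := squeeze hb G₂ Bc Bc c hg₂ hh₂ hl₂ (by rw [hBcBc, hn₂]; omega)
  -- the "backward" chains
  have hB₁ := squeeze hb G₁.reverse c c Bc (gallery_reverse hb hg₁)
    (by rw [List.head?_reverse, hl₁]) (by rw [List.getLast?_reverse, hh₁])
    (by rw [hcc, length_symm hb, List.length_reverse, hn₁]; omega)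
  have hB₂ := squeeze hb G₂.reverse c c Bc (gallery_reverse hb hg₂)
    (by rw [List.head?_reverse, hl₂]) (by rw [List.getLast?_reverse, hh₂])
    (by rw [hcc, length_symm hb, List.length_reverse, hn₂]; omega)
  rw [List.Chain', List.isChain_reverse] at hB₁ hB₂
  -- values of γ
  have hγval₁ : ∀ (j : ℕ) (h1 : j < γ.length) (h2 : j < G₁.length),
      δC Bc (G₁[j]'h2) = γ[j]'h1 := by
    intro j h1 h2
    have h3 : Γ₁[j]'(by omega) = G₁[j]'h2 := hΓ₁.getElem (by omega)
    have h4 := List.getElem_of_eq hπ₁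
      (show j < (Γ₁.map (δC Bc)).length by rw [List.length_map]; omega)
    rw [List.getElem_map] at h4
    rw [← h3]
    exact h4
  have hγval₂ : ∀ (j : ℕ) (h1 : j < γ.length) (h2 : j < G₂.length),
      δC Bc (G₂[j]'h2) = γ[j]'h1 := by
    intro j h1 h2
    have h3 : Γ₂[j]'(by omega) = G₂[j]'h2 := hΓ₂.getElem (by omega)
    have h4 := List.getElem_of_eq hπ₂
      (show j < (Γ₂.map (δC Bc)).length by rw [List.length_map]; omega)
    rw [List.getElem_map] at h4
    rw [← h3]
    exact h4
  -- main induction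
  have key : ∀ (j : ℕ) (hj : j < γ.length),
      G₁[j]'(by omega) = G₂[j]'(by omega) := by
    intro j
    induction j with
    | zero =>
      intro hj
      have hne₁ : G₁ ≠ [] := by rintro rfl; simp at hh₁
      have hne₂ : G₂ ≠ [] := by rintro rfl; simp at hh₂
      have e1 := List.head?_eq_head (l := G₁) hne₁
      have e2 := List.head?_eq_head (l := G₂) hne₂
      rw [hh₁] at e1; rw [hh₂] at e2
      rw [List.getElem_zero, List.getElem_zero]
      rw [← Option.some_inj.mp e1, ← Option.some_inj.mp e2]
    | succ j ih =>
      intro hj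
      have q1 : j < G₁.length := by omega
      have q1' : j + 1 < G₁.length := by omega
      have q2 : j < G₂.length := by omega
      have q2' : j + 1 < G₂.length := by omega
      have hγj : j + 1 < γ.length := hj
      have hd : G₁[j]'q1 = G₂[j]'q2 := ih (by omega)
      obtain ⟨t, ht⟩ := chain'_getElem hg₁ q1 q1'
      obtain ⟨t', ht'⟩ := chain'_getElem hg₂ q2 q2'
      have hA₁j := chain'_getElem hA₁ q1 q1'
      have hA₂j := chain'_getElem hA₂ q2 q2'
      have hB₁j := chain'_getElem hB₁ q1 q1'
      have hB₂j := chain'_getElem hB₂ q2 q2'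
      rw [ht] at hA₁j
      rw [ht'] at hA₂j
      -- the two next chambers have the same projection
      have hbx : δC Bc (G₁[j + 1]'q1') = δC Bc (G₂[j + 1]'q2') :=
        (hγval₁ (j + 1) hγj q1').trans (hγval₂ (j + 1) hγj q2').symm
      -- the two letters agree
      have e2 : δC Bc (G₂[j + 1]'q2') = δC Bc (G₁[j]'q1) * cs.simple t' := by
        rw [hd]; exact hA₂j.1
      have hstt : cs.simple t = cs.simple t' :=
        mul_left_cancel (hA₁j.1.symm.trans (hbx.trans e2))
      -- backward (distance to c) facts
      have hcx : δC c (G₁[j]'q1) = δC c (G₁[j + 1]'q1') * cs.simple t := by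
        rw [← adj_symm hb ht]; exact hB₁j.1
      have hcy : δC c (G₁[j]'q1) = δC c (G₂[j + 1]'q2') * cs.simple t' := by
        rw [← adj_symm hb ht', hd]; exact hB₂j.1
      have hlen : cs.length (δC c (G₁[j]'q1)) =
          cs.length (δC c (G₁[j + 1]'q1')) + 1 := hB₁j.2
      have ht'' : δC (G₁[j]'q1) (G₂[j + 1]'q2') = cs.simple t' := by
        rw [hd]; exact ht'
      exact step_unique hb ht ht'' hstt hcx hcy hlen
  -- conclude
  apply List.ext_getElem (hlen₁.trans hlen₂.symm)
  intro i h₁ h₂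
  have e1 : Γ₁[i] = G₁[i]'(by omega) := hΓ₁.getElem h₁
  have e2 : Γ₂[i] = G₂[i]'(by omega) := hΓ₂.getElem h₂
  rw [e1, e2]
  exact key i (by omega)
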